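/- For λ = 2cos(π/q) with integer q ≥ 3, and U = [[λ, -1], [1, 0]], the vectors w_i = U^i (1,0)^T satisfy w_0 = (1,0)^T, w_1 = (λ,1)^T, w_{q-2} = (1,λ)^T, and w_{q-1} = (0,1)^T. -/

import Mathlib

open Real Matrix

theorem stmt_0 (q : ℕ) (hq : 3 ≤ q)
    (lam : ℝ) (hlam : lam = 2 * Real.cos (Real.pi / q))
    (U : Matrix (Fin 2) (Fin 2) ℝ) (hU : U = !![lam, -1; 1, 0])
    (w : ℕ → Fin 2 → ℝ) (hw : ∀ i, w i = (U ^ i).mulVec ![1, 0]) :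
    w 0 = ![1, 0] ∧ w 1 = ![lam, 1] ∧ w (q - 2) = ![1, lam] ∧ w (q - 1) = ![0, 1] := by
  set θ : ℝ := Real.pi / q with hθ
  have hq0 : (0:ℝ) < q := by positivity
  have hθpos : 0 < θ := by positivity
  have hθlt : θ < Real.pi := by
    have hq3 : (3:ℝ) ≤ q := by exact_mod_cast hq
    rw [hθ, div_lt_iff₀ hq0]
    nlinarith [Real.pi_pos]
  have hsin : Real.sin θ ≠ 0 := ne_of_gt (Real.sin_pos_of_pos_of_lt_pi hθpos hθlt)
  set s : ℕ → ℝ := fun i => Real.sin (i * θ) / Real.sin θ with hs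
  have hs0 : s 0 = 0 := by simp [hs]
  have hs1 : s 1 = 1 := by simp [hs, div_self hsin]
  have hrec : ∀ i : ℕ, s (i + 2) = lam * s (i + 1) - s i := by
    intro i
    have key : Real.sin ((i + 2 : ℕ) * θ) =
        2 * Real.cos θ * Real.sin ((i + 1 : ℕ) * θ) - Real.sin (i * θ) := by
      push_cast
      have h1 : ((i:ℝ) + 2) * θ = ((i:ℝ) + 1) * θ + θ := by ring
      have h2 : (i:ℝ) * θ = ((i:ℝ) + 1) * θ - θ := by ring
      rw [h1, h2, Real.sin_add, Real.sin_sub]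
      ring
    simp only [hs, hlam, hθ.symm]
    rw [key]
    field_simp
  have hmain : ∀ i : ℕ, w i = ![s (i + 1), s i] := by
    intro i
    rw [hw]
    induction i with
    | zero =>
      funext j
      fin_cases j <;> simp [Matrix.mulVec, dotProduct, Fin.sum_univ_two, hs0, hs1]
    | succ n ih =>
      have : (U ^ (n + 1)).mulVec ![1, 0] = U.mulVec ((U ^ n).mulVec ![1, 0]) := by
        rw [pow_succ']
        rw [Matrix.mulVec_mulVec]
      rw [this, ih, hU]
      funext j
      fin_cases j <;>
        simp [Matrix.mulVec, dotProduct, Fin.sum_univ_two, hrec n] <;> ring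
  -- values at q-2, q-1
  have hcast2 : ((q - 2 : ℕ) : ℝ) = (q : ℝ) - 2 := by
    have : 2 ≤ q := by omega
    push_cast [Nat.cast_sub this]; ring
  have hcast1 : ((q - 1 : ℕ) : ℝ) = (q : ℝ) - 1 := by
    have : 1 ≤ q := by omega
    push_cast [Nat.cast_sub this]; ring
  have hqθ : (q : ℝ) * θ = Real.pi := by
    rw [hθ]; field_simp
  have hsq : s q = 0 := by
    simp [hs, hqθ]
  have hsq1 : s (q - 1) = 1 := by
    have : ((q - 1 : ℕ) : ℝ) * θ = Real.pi - θ := by rw [hcast1]; nlinarith [hqθ]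
    simp [hs, this, Real.sin_pi_sub, div_self hsin]
  have hsq2 : s (q - 2) = lam := by
    have : ((q - 2 : ℕ) : ℝ) * θ = Real.pi - 2 * θ := by rw [hcast2]; nlinarith [hqθ]
    rw [hs]
    simp only [this, Real.sin_pi_sub, Real.sin_two_mul]
    rw [hlam, hθ]
    have hsin' : Real.sin (Real.pi / q) ≠ 0 := hsin
    field_simp
  have e1 : q - 2 + 1 = q - 1 := by omega
  have e2 : q - 1 + 1 = q := by omega
  refine ⟨?_, ?_, ?_, ?_⟩
  · rw [hmain 0, hs0, hs1]
  · rw [hmain 1]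
    have : s 2 = lam := by
      have := hrec 0; simp [hs0, hs1] at this; simpa using this
    rw [this, hs1]
  · rw [hmain (q - 2), e1, hsq1, hsq2]
  · rw [hmain (q - 1), e2, hsq, hsq1]
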